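/- Let z0 > 0 and let r : ℝ → ℂ be continuous with sup_{|ζ|≤z0} |r(ζ)| < 1 and |r(-ζ)| = |r(ζ)| for all ζ ∈ [-z0, z0]. Define κ = -(1/(2π))·log(1-|r(z0)|²), χ(z) = (1/(2πi))·∫_{-z0}^{z0} log((1-|r(ζ)|²)/(1-|r(z0)|²))·(ζ-z)^{-1} dζ, and δ(z) = ((z-z0)/(z+z0))^{iκ}·e^{χ(z)} for z ∈ ℂ ∖ [-z0, z0], where w^{iκ} is taken with the principal branch of the logarithm. Then for every z ∈ ℂ ∖ [-z0, z0] one has the symmetries δ(z) = (conj(δ(conj(z))))^{-1} and δ(z) = conj(δ(-conj(z))). -/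

import Mathlib

open Real MeasureTheory

private lemma conj_intervalIntegral (f : ℝ → ℂ) (a b : ℝ) :
    (∫ x in a..b, (starRingEnd ℂ) (f x)) = (starRingEnd ℂ) (∫ x in a..b, f x) := by
  simp only [intervalIntegral, map_sub, integral_conj]

private lemma arg_inv_ne_pi {w : ℂ} (h : w.arg ≠ π) : (w⁻¹).arg ≠ π := by
  rw [Complex.arg_inv, if_neg h]
  have h1 := Complex.neg_pi_lt_arg w
  intro h2
  linarith

private lemma mobius_slit {z0 : ℝ} (hz0 : 0 < z0) {z : ℂ}
    (hz : z ∉ (fun x : ℝ => (x : ℂ)) '' Set.Icc (-z0) z0) :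
    (z - (z0:ℂ)) / (z + (z0:ℂ)) ∈ Complex.slitPlane := by
  by_contra h
  rw [Complex.mem_slitPlane_iff] at h
  push_neg at h
  obtain ⟨hre, him⟩ := h
  set w : ℂ := (z - (z0:ℂ)) / (z + (z0:ℂ)) with hw
  set t : ℝ := w.re with htdef
  have hwt : (z - (z0:ℂ)) / (z + (z0:ℂ)) = (t : ℂ) :=
    hw ▸ (Complex.ext rfl (by simpa using him))
  have hzp : z + (z0:ℂ) ≠ 0 := by
    intro h0
    refine hz ⟨-z0, ⟨le_rfl, by linarith⟩, ?_⟩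
    push_cast
    linear_combination -h0
  have h1 : z - (z0:ℂ) = (t:ℂ) * (z + (z0:ℂ)) := (div_eq_iff hzp).mp hwt
  have key : z * (1 - (t:ℂ)) = (z0:ℂ) * (1 + (t:ℂ)) := by linear_combination h1
  have ht0 : t ≤ 0 := hre
  have h1tp : (0:ℝ) < 1 - t := by linarith
  have ht1 : (1:ℝ) - t ≠ 0 := ne_of_gt h1tp
  set x : ℝ := z0 * (1 + t) / (1 - t) with hxdef
  have hxe : x * (1 - t) = z0 * (1 + t) := div_mul_cancel₀ _ ht1
  have h1t' : ((1:ℂ) - (t:ℂ)) ≠ 0 := by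
    intro hc
    apply ht1
    exact_mod_cast (by push_cast at hc ⊢; exact hc : ((1 - t : ℝ):ℂ) = 0)
  have hzx : z = (x : ℂ) := by
    apply mul_right_cancel₀ h1t'
    rw [key]
    push_cast
    linear_combination - (by exact_mod_cast congrArg (fun y : ℝ => (y:ℂ)) hxe : (x:ℂ) * (1 - (t:ℂ)) = (z0:ℂ)*(1+(t:ℂ)))
  have hx1 : -z0 ≤ x := by
    rw [hxdef, le_div_iff₀ h1tp]; nlinarith
  have hx2 : x ≤ z0 := by
    rw [hxdef, div_le_iff₀ h1tp]; nlinarith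
  exact hz ⟨x, ⟨hx1, hx2⟩, hzx.symm⟩

theorem stmt_0 (z0 : ℝ) (hz0 : 0 < z0) (r : ℝ → ℂ) (hr : Continuous r)
    (hsup : ∃ m : ℝ, m < 1 ∧ ∀ ζ : ℝ, |ζ| ≤ z0 → ‖r ζ‖ ≤ m)
    (hsym : ∀ ζ : ℝ, ζ ∈ Set.Icc (-z0) z0 → ‖r (-ζ)‖ = ‖r ζ‖)
    (κ : ℝ) (hκ : κ = -(1 / (2 * π)) * Real.log (1 - ‖r z0‖ ^ 2))
    (χ : ℂ → ℂ)
    (hχ : ∀ z : ℂ, χ z = (1 / (2 * (π : ℂ) * Complex.I)) *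
      ∫ ζ in (-z0)..z0,
        ((Real.log ((1 - ‖r ζ‖ ^ 2) / (1 - ‖r z0‖ ^ 2)) : ℝ) : ℂ) /
          ((ζ : ℂ) - z))
    (δ : ℂ → ℂ)
    (hδ : ∀ z : ℂ, δ z = ((z - (z0 : ℂ)) / (z + (z0 : ℂ))) ^ (Complex.I * (κ : ℂ)) *
      Complex.exp (χ z)) :
    ∀ z : ℂ, z ∉ (fun x : ℝ => (x : ℂ)) '' Set.Icc (-z0) z0 →
      δ z = (starRingEnd ℂ (δ (starRingEnd ℂ z)))⁻¹ ∧
      δ z = starRingEnd ℂ (δ (-(starRingEnd ℂ z))) := by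
  intro z hz
  have hzm : z - (z0:ℂ) ≠ 0 := by
    intro h0
    exact hz ⟨z0, ⟨by linarith, le_rfl⟩, by linear_combination -h0⟩
  have hzp : z + (z0:ℂ) ≠ 0 := by
    intro h0
    refine hz ⟨-z0, ⟨le_rfl, by linarith⟩, ?_⟩
    push_cast
    linear_combination -h0
  set w : ℂ := (z - (z0:ℂ)) / (z + (z0:ℂ)) with hw
  have hw0 : w ≠ 0 := div_ne_zero hzm hzp
  have hwS := mobius_slit hz0 hz
  have hargw : w.arg ≠ π := Complex.slitPlane_arg_ne_pi hwS
  have hargwi : (w⁻¹).arg ≠ π := arg_inv_ne_pi hargw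
  have hwi0 : w⁻¹ ≠ 0 := inv_ne_zero hw0
  have hcw0 : starRingEnd ℂ w ≠ 0 := by simpa using hw0
  have hcwi0 : starRingEnd ℂ w⁻¹ ≠ 0 := by simpa using hwi0
  set Lw := Complex.log w with hLw
  -- Möbius transform values at conj z and -conj z
  have hA : (starRingEnd ℂ z - (z0:ℂ)) / (starRingEnd ℂ z + (z0:ℂ)) = starRingEnd ℂ w := by
    rw [hw, map_div₀, map_sub, map_add, Complex.conj_ofReal]
  have hB : (-(starRingEnd ℂ z) - (z0:ℂ)) / (-(starRingEnd ℂ z) + (z0:ℂ))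
      = starRingEnd ℂ w⁻¹ := by
    rw [hw, inv_div, map_div₀, map_add, map_sub, Complex.conj_ofReal,
      show -(starRingEnd ℂ z) - (z0:ℂ) = -((starRingEnd ℂ z) + z0) by ring,
      show -(starRingEnd ℂ z) + (z0:ℂ) = -((starRingEnd ℂ z) - z0) by ring,
      neg_div_neg_eq]
  -- conjugate of the constant
  have hcnum : starRingEnd ℂ (1 / (2 * (π:ℂ) * Complex.I)) = -(1 / (2 * (π:ℂ) * Complex.I)) := by
    rw [map_div₀, map_one, map_mul, map_mul, Complex.conj_I, Complex.conj_ofReal, map_ofNat,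
      mul_neg, div_neg]
  -- substitution ζ ↦ -ζ
  have hsub : (∫ ζ in (-z0)..z0,
        ((Real.log ((1 - ‖r ζ‖ ^ 2) / (1 - ‖r z0‖ ^ 2)) : ℝ) : ℂ) /
          ((ζ : ℂ) + z))
      = - ∫ ζ in (-z0)..z0,
        ((Real.log ((1 - ‖r ζ‖ ^ 2) / (1 - ‖r z0‖ ^ 2)) : ℝ) : ℂ) /
          ((ζ : ℂ) - z) := by
    have hcn := intervalIntegral.integral_comp_neg (a := -z0) (b := z0)
      (f := fun ζ : ℝ =>
        ((Real.log ((1 - ‖r ζ‖ ^ 2) / (1 - ‖r z0‖ ^ 2)) : ℝ) : ℂ) /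
          ((ζ : ℂ) - z))
    rw [neg_neg] at hcn
    rw [← hcn, ← intervalIntegral.integral_neg]
    refine intervalIntegral.integral_congr fun x hx => ?_
    have hx' : x ∈ Set.Icc (-z0) z0 := by
      rwa [Set.uIcc_of_le (by linarith : -(z0:ℝ) ≤ z0)] at hx
    have hLs : ‖r (-x)‖ = ‖r x‖ := hsym x hx'
    show ((Real.log ((1 - ‖r x‖ ^ 2) / (1 - ‖r z0‖ ^ 2)) : ℝ) : ℂ) /
          ((x : ℂ) + z)
        = -(((Real.log ((1 - ‖r (-x)‖ ^ 2) / (1 - ‖r z0‖ ^ 2)) : ℝ) : ℂ) /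
          (((-x : ℝ) : ℂ) - z))
    rw [hLs]
    push_cast
    rw [show -(x:ℂ) - z = -((x:ℂ) + z) by ring, div_neg, neg_neg]
  -- conjugation identities for χ
  have hχ1 : starRingEnd ℂ (χ (starRingEnd ℂ z)) = - χ z := by
    rw [hχ (starRingEnd ℂ z), hχ z, map_mul, hcnum, ← conj_intervalIntegral]
    have e1 : (∫ ζ in (-z0)..z0, starRingEnd ℂ
          (((Real.log ((1 - ‖r ζ‖ ^ 2) / (1 - ‖r z0‖ ^ 2)) : ℝ) : ℂ) /
            ((ζ : ℂ) - starRingEnd ℂ z)))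
        = ∫ ζ in (-z0)..z0,
          ((Real.log ((1 - ‖r ζ‖ ^ 2) / (1 - ‖r z0‖ ^ 2)) : ℝ) : ℂ) /
            ((ζ : ℂ) - z) := by
      refine intervalIntegral.integral_congr fun x hx => ?_
      simp [map_div₀, Complex.conj_ofReal]
    rw [e1, neg_mul]
  have hχ2 : starRingEnd ℂ (χ (-(starRingEnd ℂ z))) = χ z := by
    rw [hχ (-(starRingEnd ℂ z)), hχ z, map_mul, hcnum, ← conj_intervalIntegral]
    have e1 : (∫ ζ in (-z0)..z0, starRingEnd ℂ
          (((Real.log ((1 - ‖r ζ‖ ^ 2) / (1 - ‖r z0‖ ^ 2)) : ℝ) : ℂ) /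
            ((ζ : ℂ) - -(starRingEnd ℂ z))))
        = ∫ ζ in (-z0)..z0,
          ((Real.log ((1 - ‖r ζ‖ ^ 2) / (1 - ‖r z0‖ ^ 2)) : ℝ) : ℂ) /
            ((ζ : ℂ) + z) := by
      refine intervalIntegral.integral_congr fun x hx => ?_
      simp [map_div₀, Complex.conj_ofReal, sub_neg_eq_add]
    rw [e1, hsub]
    ring
  -- exponential form of δ z
  have hδz : δ z = Complex.exp (Lw * (Complex.I * (κ:ℂ)) + χ z) := by
    rw [hδ z, ← hw, Complex.cpow_def_of_ne_zero hw0, ← hLw, Complex.exp_add]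
  have hδz0 : δ z ≠ 0 := by rw [hδz]; exact Complex.exp_ne_zero _
  have hconj1 : starRingEnd ℂ (δ (starRingEnd ℂ z)) = (δ z)⁻¹ := by
    rw [hδ (starRingEnd ℂ z), hA, map_mul,
      Complex.cpow_def_of_ne_zero hcw0, Complex.log_conj _ hargw,
      ← Complex.exp_conj, ← Complex.exp_conj, ← Complex.exp_add, hδz, ← Complex.exp_neg]
    congr 1
    rw [hχ1]
    rw [← hLw]
    simp only [map_mul, Complex.conj_conj, Complex.conj_I, Complex.conj_ofReal]
    ring
  have hconj2 : starRingEnd ℂ (δ (-(starRingEnd ℂ z))) = δ z := by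
    rw [hδ (-(starRingEnd ℂ z)), hB, map_mul,
      Complex.cpow_def_of_ne_zero hcwi0, Complex.log_conj _ hargwi, Complex.log_inv _ hargw,
      ← Complex.exp_conj, ← Complex.exp_conj, ← Complex.exp_add, hδz]
    congr 1
    rw [hχ2, ← hLw]
    simp only [map_mul, map_neg, Complex.conj_conj, Complex.conj_I, Complex.conj_ofReal]
    ring
  exact ⟨by rw [hconj1, inv_inv], hconj2.symm⟩
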